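/- Let S, T be nonempty finite subsets of a set I with a common nonempty subset A ⊆ S ∩ T and suppose S ∪ T ⊆ U for some finite set U with |U| ≤ M and |A| ≥ 1. Then ‖ξ_S − ξ_T‖₁ ≤ 2(1 − |A|/|U|). -/
import Mathlib


noncomputable def xi {I : Type*} [DecidableEq I] (S : Finset I) (i : I) : ℝ :=
  if i ∈ S then ((S.card : ℝ))⁻¹ else 0

open Finset in
lemma stmt12_aux {I : Type*} [DecidableEq I] (A S T U : Finset I)
    (hS : S.Nonempty) (hT : T.Nonempty) (hA : A.Nonempty)
    (hAST : A ⊆ S ∩ T) (hSTU : S ∪ T ⊆ U) (hst : S.card ≤ T.card) :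
    ∑ i ∈ S ∪ T, |xi S i - xi T i| ≤ 2 * (1 - (A.card : ℝ) / (U.card : ℝ)) := by
  have hSU : S ⊆ U := subset_union_left.trans hSTU
  have hTU : T ⊆ U := subset_union_right.trans hSTU
  have hAU : A ⊆ U := hAST.trans (inter_subset_left.trans hSU)
  have hS0 : (0:ℝ) < S.card := by exact_mod_cast card_pos.mpr hS
  have hT0 : (0:ℝ) < T.card := by exact_mod_cast card_pos.mpr hT
  have hU0 : (0:ℝ) < U.card := by exact_mod_cast card_pos.mpr (hA.mono hAU)
  have hinv : (T.card:ℝ)⁻¹ ≤ (S.card:ℝ)⁻¹ := by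
    apply inv_anti₀ hS0
    exact_mod_cast hst
  have hd1 : Disjoint (S \ T) ((T \ S) ∪ (S ∩ T)) := by
    simp only [disjoint_union_right]
    constructor <;> (rw [Finset.disjoint_left]; intro x hx hx'; simp at hx hx'; tauto)
  have hd2 : Disjoint (T \ S) (S ∩ T) := by
    rw [Finset.disjoint_left]; intro x hx hx'; simp at hx hx'; tauto
  have hcover : S ∪ T = (S \ T) ∪ ((T \ S) ∪ (S ∩ T)) := by
    ext x; simp; tauto
  have e1 : ∑ i ∈ S \ T, |xi S i - xi T i| = ((S \ T).card : ℝ) * (S.card:ℝ)⁻¹ := by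
    rw [Finset.sum_congr rfl (fun i hi => ?_), sum_const, nsmul_eq_mul]
    have h := mem_sdiff.mp hi
    rw [xi, xi, if_pos h.1, if_neg h.2, sub_zero, abs_of_nonneg (by positivity)]
  have e2 : ∑ i ∈ T \ S, |xi S i - xi T i| = ((T \ S).card : ℝ) * (T.card:ℝ)⁻¹ := by
    rw [Finset.sum_congr rfl (fun i hi => ?_), sum_const, nsmul_eq_mul]
    have h := mem_sdiff.mp hi
    rw [xi, xi, if_pos h.1, if_neg h.2, zero_sub, abs_neg, abs_of_nonneg (by positivity)]
  have e3 : ∑ i ∈ S ∩ T, |xi S i - xi T i| = ((S ∩ T).card : ℝ) * ((S.card:ℝ)⁻¹ - (T.card:ℝ)⁻¹) := by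
    rw [Finset.sum_congr rfl (fun i hi => ?_), sum_const, nsmul_eq_mul]
    have h := mem_inter.mp hi
    rw [xi, xi, if_pos h.1, if_pos h.2, abs_of_nonneg (by linarith)]
  have hsum : ∑ i ∈ S ∪ T, |xi S i - xi T i|
      = ((S \ T).card : ℝ) * (S.card:ℝ)⁻¹ + ((T \ S).card : ℝ) * (T.card:ℝ)⁻¹
        + ((S ∩ T).card : ℝ) * ((S.card:ℝ)⁻¹ - (T.card:ℝ)⁻¹) := by
    rw [hcover, sum_union hd1, sum_union hd2, e1, e2, e3]; ring
  have hcS : ((S \ T).card : ℝ) = (S.card : ℝ) - ((S ∩ T).card : ℝ) := by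
    have := card_sdiff_add_card_inter S T
    push_cast [← this]; ring
  have hcT : ((T \ S).card : ℝ) = (T.card : ℝ) - ((S ∩ T).card : ℝ) := by
    have := card_sdiff_add_card_inter T S
    rw [inter_comm] at this
    push_cast [← this]; ring
  rw [hsum, hcS, hcT]
  have hac : (A.card : ℝ) ≤ ((S ∩ T).card : ℝ) := by exact_mod_cast card_le_card hAST
  have htu : (T.card : ℝ) ≤ (U.card : ℝ) := by exact_mod_cast card_le_card hTU
  have ha0 : (0:ℝ) ≤ (A.card : ℝ) := by positivity
  have key : (A.card : ℝ) / (U.card : ℝ) ≤ ((S ∩ T).card : ℝ) / (T.card : ℝ) := by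
    rw [div_le_div_iff₀ hU0 hT0]
    exact mul_le_mul hac htu hT0.le (by positivity)
  have lhs_eq : ((S.card:ℝ) - ((S ∩ T).card:ℝ)) * (S.card:ℝ)⁻¹
      + ((T.card:ℝ) - ((S ∩ T).card:ℝ)) * (T.card:ℝ)⁻¹
      + ((S ∩ T).card : ℝ) * ((S.card:ℝ)⁻¹ - (T.card:ℝ)⁻¹)
      = 2 - 2 * (((S ∩ T).card : ℝ) / (T.card : ℝ)) := by
    field_simp
    ring
  rw [lhs_eq]
  linarith

theorem stmt12 {I : Type*} [DecidableEq I] (A S T U : Finset I) (M : ℕ)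
    (hS : S.Nonempty) (hT : T.Nonempty) (hA : A.Nonempty)
    (hAST : A ⊆ S ∩ T) (hSTU : S ∪ T ⊆ U) (hU : U.card ≤ M) :
    ∑ i ∈ S ∪ T, |xi S i - xi T i| ≤ 2 * (1 - (A.card : ℝ) / (U.card : ℝ)) := by
  rcases le_total S.card T.card with h | h
  · exact stmt12_aux A S T U hS hT hA hAST hSTU h
  · have h' := stmt12_aux A T S U hT hS hA (by rwa [Finset.inter_comm])
      (by rwa [Finset.union_comm]) h
    calc ∑ i ∈ S ∪ T, |xi S i - xi T i|
        = ∑ i ∈ T ∪ S, |xi T i - xi S i| := by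
          rw [Finset.union_comm]
          exact Finset.sum_congr rfl fun i _ => abs_sub_comm _ _
      _ ≤ _ := h'
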